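/- (Remark after Theorem 1.2, local-maximum property of the identity block.) Let k ≥ 1 and 1 ≤ c ≤ k be integers, let H ∈ ℝ^{k×k} be a Hadamard matrix (all entries ±1 and Hᵀ·H = k·I_k), and let A = [I_k | c^{−1/2}·H] ∈ ℝ^{k×2k} (columns 1,…,k form I_k and columns k+1,…,2k form c^{−1/2}·H). Then for every J ⊆ {1,…,2k} with |J| = k and |{1,…,k} Δ J| ≤ 2c, one has |det(A_{[k],J})| ≤ 1 = |det(A_{[k],{1,…,k}})|. In other words, ({1,…,k},{1,…,k}) is a (c,1)-local maximum for k×k subdeterminant maximization on A. -/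

import Mathlib

open Finset

/-- The determinant of the maximal (`m × m`) submatrix of `A : ℝ^{m×n}` using all rows
and the columns in `S` (in increasing order); junk value `0` if `S.card ≠ m`. -/
noncomputable def colsDet {m n : ℕ} (A : Matrix (Fin m) (Fin n) ℝ)
    (S : Finset (Fin n)) : ℝ :=
  if h : S.card = m then (A.submatrix id (S.orderEmbOfFin h)).det else 0

open Matrix

lemma amgm_prod_le (t : ℕ) (ht : 0 < t) (z : Fin t → ℝ) (hz : ∀ i, 0 ≤ z i) :
    ∏ i, z i ≤ ((∑ i, z i) / t) ^ t := by
  have hP : (0:ℝ) ≤ ∏ i, z i := Finset.prod_nonneg fun i _ => hz i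
  have h : ∏ i, z i ^ ((t:ℝ)⁻¹) ≤ ∑ i, (t:ℝ)⁻¹ * z i :=
    Real.geom_mean_le_arith_mean_weighted univ (fun _ => (t : ℝ)⁻¹) z
    (fun _ _ => by positivity)
    (by simp [Finset.card_univ]; field_simp)
    (fun i _ => hz i)
  rw [Real.finset_prod_rpow _ _ (fun i _ => hz i), ← Finset.mul_sum] at h
  have hne : (t:ℝ) ≠ 0 := by positivity
  have hid : ((∏ i, z i) ^ ((t : ℝ)⁻¹)) ^ (t:ℕ) = ∏ i, z i := by
    rw [← Real.rpow_natCast (_ ^ _) t, ← Real.rpow_mul hP, inv_mul_cancel₀ hne, Real.rpow_one]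
  calc ∏ i, z i = ((∏ i, z i) ^ ((t : ℝ)⁻¹)) ^ (t:ℕ) := hid.symm
    _ ≤ ((t:ℝ)⁻¹ * ∑ i, z i) ^ (t:ℕ) := by
        apply pow_le_pow_left₀ (Real.rpow_nonneg hP _) h
    _ = ((∑ i, z i) / t) ^ t := by rw [inv_mul_eq_div]

lemma hadamard_pm1 {t : ℕ} (N : Matrix (Fin t) (Fin t) ℝ)
    (hN : ∀ i j, N i j = 1 ∨ N i j = -1) : |N.det| ≤ Real.sqrt t ^ t := by
  rcases Nat.eq_zero_or_pos t with rfl | ht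
  · simp [Matrix.det_fin_zero]
  have hPSD : (Nᴴ * N).PosSemidef := Matrix.posSemidef_conjTranspose_mul_self N
  have hHerm := hPSD.1
  have hdet : (Nᴴ * N).det = N.det ^ 2 := by
    rw [Matrix.det_mul, Matrix.det_conjTranspose]
    simp [sq]
  have htr : (Nᴴ * N).trace = (t : ℝ) * t := by
    have hd : ∀ j, (Nᴴ * N) j j = (t : ℝ) := by
      intro j
      simp only [Matrix.mul_apply, Matrix.conjTranspose_apply, star_trivial]
      have : ∀ i, N i j * N i j = 1 := fun i => by rcases hN i j with h | h <;> rw [h] <;> ring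
      simp [this, Finset.card_univ]
    simp only [Matrix.trace, Matrix.diag, hd, Finset.sum_const, Finset.card_univ,
      nsmul_eq_mul, Fintype.card_fin]
  have hev := hHerm.det_eq_prod_eigenvalues
  have htr2 : (Nᴴ * N).trace = ∑ i, hHerm.eigenvalues i := by
    conv_lhs => rw [hHerm.spectral_theorem]
    rw [Unitary.conjStarAlgAut_apply]
    rw [Matrix.trace_mul_cycle]
    have hu : (star ((hHerm.eigenvectorUnitary : Matrix (Fin t) (Fin t) ℝ)) *
        (hHerm.eigenvectorUnitary : Matrix (Fin t) (Fin t) ℝ)) = 1 :=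
      (Matrix.mem_unitaryGroup_iff').mp (hHerm.eigenvectorUnitary).2
    rw [hu, one_mul, Matrix.trace_diagonal]
    simp
  have hz : ∀ i, 0 ≤ hHerm.eigenvalues i := hPSD.eigenvalues_nonneg
  have key : N.det ^ 2 ≤ (t : ℝ) ^ t := by
    rw [← hdet, hev]
    calc ∏ i, (hHerm.eigenvalues i : ℝ) ≤ ((∑ i, hHerm.eigenvalues i) / t) ^ t :=
          amgm_prod_le t ht _ hz
      _ = (t : ℝ) ^ t := by rw [← htr2, htr]; congr 1; field_simp
  have h1 : |N.det| ^ 2 ≤ (Real.sqrt t ^ t) ^ 2 := by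
    rw [← pow_mul, mul_comm t 2, pow_mul, Real.sq_sqrt (by positivity)]
    rwa [sq_abs]
  exact (pow_le_pow_iff_left₀ (abs_nonneg _) (by positivity) (by norm_num)).mp h1

/-- **Remark after Theorem 1.2** (local-maximum property of the identity block).
`A = [I_k | c^{−1/2} H] ∈ ℝ^{k×2k}` with `H` a Hadamard matrix; columns are indexed
0-based by `Fin (2k)`, with `K = {0,…,k−1}` the columns of the identity block. For
every column set `J` of size `k` with `|K Δ J| ≤ 2c`, we have
`|det A_{[k],J}| ≤ 1 = |det A_{[k],K}|`; i.e. `([k], K)` is a `(c,1)`-local maximum. -/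
theorem identity_block_local_max {k c : ℕ} (hk : 1 ≤ k) (hc1 : 1 ≤ c) (hck : c ≤ k)
    (H : Matrix (Fin k) (Fin k) ℝ)
    (hH1 : ∀ i j, H i j = 1 ∨ H i j = -1)
    (hH2 : H.transpose * H = (k : ℝ) • (1 : Matrix (Fin k) (Fin k) ℝ))
    (A : Matrix (Fin k) (Fin (2 * k)) ℝ)
    (hA1 : ∀ (i : Fin k) (j : Fin (2 * k)), (j : ℕ) < k →
      A i j = if (i : ℕ) = (j : ℕ) then 1 else 0)
    (hA2 : ∀ (i : Fin k) (j : Fin (2 * k)) (j' : Fin k), (j : ℕ) = k + (j' : ℕ) →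
      A i j = (Real.sqrt c)⁻¹ * H i j')
    (K : Finset (Fin (2 * k))) (hK : ∀ x, x ∈ K ↔ (x : ℕ) < k) :
    (∀ J : Finset (Fin (2 * k)), J.card = k → (symmDiff K J).card ≤ 2 * c →
      |colsDet A J| ≤ 1) ∧ |colsDet A K| = 1 := by
  classical
  set ι : Fin k → Fin (2 * k) := fun i => ⟨(i : ℕ), by omega⟩ with hι
  have hιinj : Function.Injective ι := by
    intro a b h
    apply Fin.ext
    simpa [ι, Fin.ext_iff] using h
  have hKcard : K.card = k := by
    have hKm : K = Finset.map ⟨ι, hιinj⟩ Finset.univ := by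
      ext x
      simp only [hK, Finset.mem_map, Finset.mem_univ, true_and,
        Function.Embedding.coeFn_mk]
      constructor
      · intro hx; exact ⟨⟨(x : ℕ), hx⟩, Fin.ext rfl⟩
      · rintro ⟨i, rfl⟩; exact i.isLt
    rw [hKm, Finset.card_map, Finset.card_univ, Fintype.card_fin]
  constructor
  · intro J hJ hsd
    -- cardinalities
    set t := (J \ K).card with ht
    set sc := (K ∩ J).card with hsc
    have hst : sc + t = k := by
      have h1 := Finset.card_inter_add_card_sdiff J K
      rw [Finset.inter_comm] at h1
      omega
    have hKJt : (K \ J).card = t := by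
      have h1 := Finset.card_inter_add_card_sdiff K J
      omega
    have htc : t ≤ c := by
      have hdisj : Disjoint (K \ J) (J \ K) := disjoint_sdiff_sdiff
      have hsd2 : (symmDiff K J).card = (K \ J).card + (J \ K).card := by
        rw [symmDiff_def, Finset.sup_eq_union, Finset.card_union_of_disjoint hdisj]
      omega
    -- column embedding and predicates
    unfold colsDet
    rw [dif_pos hJ]
    set emb := J.orderEmbOfFin hJ with hembJ
    set M := A.submatrix id ⇑emb with hM
    set pr : Fin k → Prop := fun i => ι i ∈ J with hpr
    set pc : Fin k → Prop := fun p => ((emb p : Fin (2*k)) : ℕ) < k with hpc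
    set Rs := Finset.univ.filter pr with hRsdef
    set Rt := Finset.univ.filter (fun i => ¬ pr i) with hRtdef
    set Cs := Finset.univ.filter pc with hCsdef
    set Ct := Finset.univ.filter (fun p => ¬ pc p) with hCtdef
    have hRs : Rs.card = sc := by
      have hmap : K ∩ J = Finset.map ⟨ι, hιinj⟩ Rs := by
        ext x
        simp only [Finset.mem_inter, hK, Finset.mem_map, Finset.mem_filter, Finset.mem_univ,
          true_and, Function.Embedding.coeFn_mk, hRsdef, hpr]
        constructor
        · rintro ⟨hx1, hx2⟩
          refine ⟨⟨(x : ℕ), hx1⟩, ?_, Fin.ext rfl⟩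
          have : ι ⟨(x : ℕ), hx1⟩ = x := Fin.ext rfl
          rwa [this]
        · rintro ⟨i, hi, rfl⟩
          exact ⟨i.isLt, hi⟩
      rw [hsc, hmap, Finset.card_map]
    have hCs : Cs.card = sc := by
      have hmap : K ∩ J = Finset.map ⟨⇑emb, emb.injective⟩ Cs := by
        ext x
        simp only [Finset.mem_inter, hK, Finset.mem_map, Finset.mem_filter, Finset.mem_univ,
          true_and, Function.Embedding.coeFn_mk, hCsdef, hpc]
        constructor
        · rintro ⟨hx1, hx2⟩
          obtain ⟨p, hp⟩ : ∃ p, emb p = x := by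
            have hr := Finset.range_orderEmbOfFin J hJ
            have : x ∈ Set.range ⇑(J.orderEmbOfFin hJ) := by rw [hr]; exact hx2
            exact this
          exact ⟨p, by rw [hp]; exact hx1, hp⟩
        · rintro ⟨p, hp1, rfl⟩
          exact ⟨hp1, Finset.orderEmbOfFin_mem J hJ p⟩
      rw [hsc, hmap, Finset.card_map]
    have hRt : Rt.card = t := by
      have := Finset.card_filter_add_card_filter_not (s := Finset.univ) (p := pr)
      rw [← hRsdef, ← hRtdef] at this
      rw [Finset.card_univ, Fintype.card_fin] at this
      omega
    have hCt : Ct.card = t := by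
      have := Finset.card_filter_add_card_filter_not (s := Finset.univ) (p := pc)
      rw [← hCsdef, ← hCtdef] at this
      rw [Finset.card_univ, Fintype.card_fin] at this
      omega
    -- equivalences
    have hRsm : ∀ x, x ∈ Rs ↔ pr x := by intro x; simp [hRsdef]
    have hRtm : ∀ x, x ∈ Rt ↔ ¬ pr x := by intro x; simp [hRtdef]
    have hCsm : ∀ x, x ∈ Cs ↔ pc x := by intro x; simp [hCsdef]
    have hCtm : ∀ x, x ∈ Ct ↔ ¬ pc x := by intro x; simp [hCtdef]
    set eR : (Fin sc ⊕ Fin t) ≃ Fin k :=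
      (Equiv.sumCongr ((Rs.orderIsoOfFin hRs).toEquiv.trans (Equiv.subtypeEquivRight hRsm))
        ((Rt.orderIsoOfFin hRt).toEquiv.trans (Equiv.subtypeEquivRight hRtm))).trans
        (Equiv.sumCompl pr) with heR
    set eC : (Fin sc ⊕ Fin t) ≃ Fin k :=
      (Equiv.sumCongr ((Cs.orderIsoOfFin hCs).toEquiv.trans (Equiv.subtypeEquivRight hCsm))
        ((Ct.orderIsoOfFin hCt).toEquiv.trans (Equiv.subtypeEquivRight hCtm))).trans
        (Equiv.sumCompl pc) with heC
    have heR1 : ∀ i, eR (Sum.inl i) = Rs.orderEmbOfFin hRs i := by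
      intro i
      simp [heR, Equiv.subtypeEquivRight, Finset.coe_orderIsoOfFin_apply]
      rfl
    have heR2 : ∀ i, eR (Sum.inr i) = Rt.orderEmbOfFin hRt i := by
      intro i
      simp [heR, Equiv.subtypeEquivRight, Finset.coe_orderIsoOfFin_apply]
      rfl
    have heC1 : ∀ i, eC (Sum.inl i) = Cs.orderEmbOfFin hCs i := by
      intro i
      simp [heC, Equiv.subtypeEquivRight, Finset.coe_orderIsoOfFin_apply]
      rfl
    have heC2 : ∀ i, eC (Sum.inr i) = Ct.orderEmbOfFin hCt i := by
      intro i
      simp [heC, Equiv.subtypeEquivRight, Finset.coe_orderIsoOfFin_apply]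
      rfl
    -- predicates hold on blocks
    have hprR : ∀ i, pr (eR (Sum.inl i)) := by
      intro i; rw [heR1]
      exact (hRsm _).1 (Finset.orderEmbOfFin_mem Rs hRs i)
    have hprR' : ∀ i, ¬ pr (eR (Sum.inr i)) := by
      intro i; rw [heR2]
      exact (hRtm _).1 (Finset.orderEmbOfFin_mem Rt hRt i)
    have hpcC : ∀ i, pc (eC (Sum.inl i)) := by
      intro i; rw [heC1]
      exact (hCsm _).1 (Finset.orderEmbOfFin_mem Cs hCs i)
    have hpcC' : ∀ i, ¬ pc (eC (Sum.inr i)) := by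
      intro i; rw [heC2]
      exact (hCtm _).1 (Finset.orderEmbOfFin_mem Ct hCt i)
    set M' := M.submatrix ⇑eR ⇑eC with hM'
    have habs : |M.det| = |M'.det| := by
      have h1 : M' = (M.submatrix ⇑eR ⇑eR).submatrix id ⇑(eC.trans eR.symm) := by
        ext i j
        simp [hM', Matrix.submatrix_apply]
      rw [h1, Matrix.det_permute', Matrix.det_submatrix_equiv_self, abs_mul]
      rcases Int.units_eq_one_or (Equiv.Perm.sign (eC.trans eR.symm)) with h | h <;>
        rw [h] <;> norm_num
    -- lower-left block is zero
    have hzero : M'.toBlocks₂₁ = 0 := by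
      ext i j
      simp only [Matrix.toBlocks₂₁, Matrix.of_apply, hM', Matrix.submatrix_apply, hM, id_eq,
        Matrix.zero_apply]
      rw [hA1 _ _ (hpcC j), if_neg]
      intro hcontr
      apply hprR' i
      show ι (eR (Sum.inr i)) ∈ J
      have : ι (eR (Sum.inr i)) = emb (eC (Sum.inl j)) := Fin.ext hcontr
      rw [this]
      exact Finset.orderEmbOfFin_mem J hJ _
    -- upper-left block is the identity
    have hpcj : ∀ j : Fin sc, ((emb (Cs.orderEmbOfFin hCs j) : Fin (2*k)) : ℕ) < k :=
      fun j => (hCsm _).1 (Finset.orderEmbOfFin_mem Cs hCs j)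
    have hval : ∀ j : Fin sc,
        ((Rs.orderEmbOfFin hRs j : Fin k) : ℕ) = ((emb (Cs.orderEmbOfFin hCs j) : Fin (2*k)) : ℕ) := by
      have hkey : (fun j : Fin sc => (⟨((emb (Cs.orderEmbOfFin hCs j) : Fin (2*k)) : ℕ), hpcj j⟩ : Fin k))
          = ⇑(Rs.orderEmbOfFin hRs) := by
        apply Finset.orderEmbOfFin_unique hRs
        · intro x
          rw [hRsm]
          show ι _ ∈ J
          have : ι ⟨((emb (Cs.orderEmbOfFin hCs x) : Fin (2*k)) : ℕ), hpcj x⟩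
              = emb (Cs.orderEmbOfFin hCs x) := Fin.ext rfl
          rw [this]
          exact Finset.orderEmbOfFin_mem J hJ _
        · intro a b hab
          show ((emb (Cs.orderEmbOfFin hCs a) : Fin (2*k)) : ℕ) < _
          exact emb.strictMono ((Cs.orderEmbOfFin hCs).strictMono hab)
      intro j
      conv_lhs => rw [← hkey]
    have hUL : M'.toBlocks₁₁ = 1 := by
      ext i j
      simp only [Matrix.toBlocks₁₁, Matrix.of_apply, hM', Matrix.submatrix_apply, hM, id_eq]
      rw [heR1, heC1, hA1 _ _ (hpcj j), Matrix.one_apply]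
      have hiff : ((Rs.orderEmbOfFin hRs i : Fin k) : ℕ)
          = ((emb (Cs.orderEmbOfFin hCs j) : Fin (2*k)) : ℕ) ↔ i = j := by
        rw [← hval j]
        constructor
        · intro h
          exact (Rs.orderEmbOfFin hRs).injective (Fin.ext h)
        · rintro rfl; rfl
      rw [if_congr hiff rfl rfl]
    -- lower-right block
    have hctk : ∀ j : Fin t, k ≤ ((emb (Ct.orderEmbOfFin hCt j) : Fin (2*k)) : ℕ) := by
      intro j
      have := (hCtm _).1 (Finset.orderEmbOfFin_mem Ct hCt j)
      rw [hpc] at this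
      omega
    set g : Fin t → Fin k := fun j =>
      ⟨((emb (Ct.orderEmbOfFin hCt j) : Fin (2*k)) : ℕ) - k, by
        have h1 := (emb (Ct.orderEmbOfFin hCt j)).isLt
        have h2 := hctk j
        omega⟩ with hg
    set N : Matrix (Fin t) (Fin t) ℝ :=
      Matrix.of (fun i j => H (Rt.orderEmbOfFin hRt i) (g j)) with hN
    have hLR : M'.toBlocks₂₂ = ((Real.sqrt c)⁻¹ : ℝ) • N := by
      ext i j
      simp only [Matrix.toBlocks₂₂, Matrix.of_apply, hM', Matrix.submatrix_apply, hM, id_eq,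
        Matrix.smul_apply, hN, smul_eq_mul]
      rw [heR2, heC2]
      exact hA2 _ _ (g j) (by
        show _ = k + (((emb (Ct.orderEmbOfFin hCt j) : Fin (2*k)) : ℕ) - k)
        have := hctk j
        omega)
    -- put it together
    have hdet' : M'.det = M'.toBlocks₁₁.det * M'.toBlocks₂₂.det := by
      conv_lhs => rw [← Matrix.fromBlocks_toBlocks M', hzero]
      exact Matrix.det_fromBlocks_zero₂₁ _ _ _
    have hMtarget : |M.det| ≤ 1 := by
      rw [habs, hdet', hUL, Matrix.det_one, one_mul, hLR, Matrix.det_smul, abs_mul, abs_pow,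
        Fintype.card_fin]
      have hHad : |N.det| ≤ Real.sqrt t ^ t :=
        hadamard_pm1 N (fun i j => hH1 _ _)
      have hcpos : (0:ℝ) < Real.sqrt c := Real.sqrt_pos.2 (by
        have : (1:ℝ) ≤ (c:ℝ) := by exact_mod_cast hc1
        linarith)
      have habsinv : |(Real.sqrt c)⁻¹| = (Real.sqrt c)⁻¹ :=
        abs_of_nonneg (inv_nonneg.2 (Real.sqrt_nonneg _))
      rw [habsinv]
      have hb1 : ((Real.sqrt c)⁻¹) ^ t * |N.det| ≤ ((Real.sqrt c)⁻¹) ^ t * Real.sqrt t ^ t :=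
        mul_le_mul_of_nonneg_left hHad (pow_nonneg (inv_nonneg.2 (Real.sqrt_nonneg _)) t)
      have hb2 : ((Real.sqrt c)⁻¹) ^ t * Real.sqrt t ^ t ≤ 1 := by
        rw [mul_comm, ← mul_pow]
        apply pow_le_one₀ (mul_nonneg (Real.sqrt_nonneg _) (inv_nonneg.2 (Real.sqrt_nonneg _)))
        have hs : Real.sqrt t ≤ Real.sqrt c := Real.sqrt_le_sqrt (by exact_mod_cast htc)
        calc Real.sqrt t * (Real.sqrt c)⁻¹ ≤ Real.sqrt c * (Real.sqrt c)⁻¹ :=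
              mul_le_mul_of_nonneg_right hs (inv_nonneg.2 (Real.sqrt_nonneg _))
          _ = 1 := mul_inv_cancel₀ (ne_of_gt hcpos)
      linarith
    exact hMtarget
  · unfold colsDet
    rw [dif_pos hKcard]
    have hemb : ι = ⇑(K.orderEmbOfFin hKcard) :=
      Finset.orderEmbOfFin_unique hKcard (fun x => (hK (ι x)).2 x.isLt)
        (fun _ _ hab => hab)
    have h1 : A.submatrix id (K.orderEmbOfFin hKcard) = 1 := by
      ext i p
      rw [Matrix.submatrix_apply, id_eq, ← hemb, hA1 i (ι p) p.isLt, Matrix.one_apply]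
      have : ((ι p : Fin (2*k)) : ℕ) = (p : ℕ) := rfl
      rw [this]
      simp [Fin.ext_iff]
    rw [h1, Matrix.det_one, abs_one]
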